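/- Suppose u : 2^[n] → ℝ≥0 is a normalized, monotone, submodular and second-order supermodular set function and c : 2^[n] → ℝ≥0 is modular with positive singleton costs; let OPT > 0 denote the minimum objective value over all permutations of [n]. Let π be a permutation of [n] whose objective value equals M·OPT. Then either π is locally optimal with respect to insertions, or there exists a move-neighbor π′ of π whose objective value is at most (M − (M−4)/(2n))·OPT. -/

import Mathlib

open Finset

/-- The set of the first `k` elements of the list `L`. -/
def prefSet {n : ℕ} (L : List (Fin n)) (k : ℕ) : Finset (Fin n) := (L.take k).toFinset

/-- Marginal value `f(e|S) = f(S ∪ {e}) - f S`. -/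
noncomputable def marg {n : ℕ} (f : Finset (Fin n) → ℝ) (e : Fin n) (S : Finset (Fin n)) : ℝ :=
  f (insert e S) - f S

/-- `L` is a listing of all elements of `[n]` (a permutation of `[n]`). -/
def IsPermList {n : ℕ} (L : List (Fin n)) : Prop := L.Nodup ∧ ∀ x : Fin n, x ∈ L

/-- The objective value `∑_{i=1}^n c(S_i)(u(S_i) - u(S_{i-1}))`. -/
noncomputable def objective {n : ℕ} (u c : Finset (Fin n) → ℝ) (L : List (Fin n)) : ℝ :=
  ∑ i ∈ Finset.range L.length,
    c (prefSet L (i + 1)) * (u (prefSet L (i + 1)) - u (prefSet L i))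

/-- The element in (1-indexed) position `k` of the list `L`. -/
def elemAt {n : ℕ} [NeZero n] (L : List (Fin n)) (k : ℕ) : Fin n := L.getD (k - 1) default

/-- The quantity `b_{ij} = u(o_i | O_{i-1} ∪ L_{j-1}) - u(o_i | O_{i-1} ∪ L_{j-1} ∪ {l_j})`. -/
noncomputable def bmat {n : ℕ} [NeZero n] (u : Finset (Fin n) → ℝ) (L O : List (Fin n))
    (i j : ℕ) : ℝ :=
  marg u (elemAt O i) (prefSet O (i - 1) ∪ prefSet L (j - 1)) -
    marg u (elemAt O i) (insert (elemAt L j) (prefSet O (i - 1) ∪ prefSet L (j - 1)))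

/-- Monotone set function. -/
def Mono {n : ℕ} (f : Finset (Fin n) → ℝ) : Prop :=
  ∀ S : Finset (Fin n), ∀ i : Fin n, f S ≤ f (insert i S)

/-- Submodular set function. -/
def Submod {n : ℕ} (f : Finset (Fin n) → ℝ) : Prop :=
  ∀ S : Finset (Fin n), ∀ i j : Fin n, i ∉ S → j ∉ S →
    marg f i (insert j S) ≤ marg f i S

/-- Second-order supermodular set function. -/
def SOSupermod {n : ℕ} (f : Finset (Fin n) → ℝ) : Prop :=
  ∀ S : Finset (Fin n), ∀ i j k : Fin n, i ∉ S → j ∉ S → k ∉ S →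
    marg f i (insert k S) - marg f i (insert j (insert k S)) ≤
      marg f i S - marg f i (insert j S)

/-- Objective value of a length-(n+1) pseudo-neighbor sequence, where costs are
counted with multiplicity via the singleton costs `cs`. -/
noncomputable def pseudoObj {n : ℕ} (u : Finset (Fin n) → ℝ) (cs : Fin n → ℝ)
    (P : List (Fin n)) : ℝ :=
  ∑ k ∈ Finset.range P.length,
    (((P.take (k + 1)).map cs).sum) * (u (prefSet P (k + 1)) - u (prefSet P k))

/-- The pseudo-neighbor of `L` obtained by inserting a second copy of the element in
(1-indexed) position `i` at (1-indexed) position `j`. -/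
def pseudoNeighbor {n : ℕ} [NeZero n] (L : List (Fin n)) (i j : ℕ) : List (Fin n) :=
  L.insertIdx (j - 1) (elemAt L i)

/-- `L` is locally optimal with respect to insertions: no pseudo-neighbor has strictly
smaller objective value. -/
def LocallyOptimalInsertions {n : ℕ} [NeZero n] (u c : Finset (Fin n) → ℝ) (cs : Fin n → ℝ)
    (L : List (Fin n)) : Prop :=
  ∀ i j : ℕ, 1 ≤ j → j < i → i ≤ n →
    objective u c L ≤ pseudoObj u cs (pseudoNeighbor L i j)

/-- The list obtained from `L` by removing the element in (1-indexed) position `i` and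
reinserting it at (1-indexed) position `j`. -/
def moveList {n : ℕ} [NeZero n] (L : List (Fin n)) (i j : ℕ) : List (Fin n) :=
  (L.eraseIdx (i - 1)).insertIdx (j - 1) (elemAt L i)

/-- `L'` is a move-neighbor of `L`. -/
def IsMoveNeighbor {n : ℕ} [NeZero n] (L L' : List (Fin n)) : Prop :=
  ∃ i j : ℕ, 1 ≤ i ∧ i ≤ n ∧ 1 ≤ j ∧ j ≤ n ∧ i ≠ j ∧ L' = moveList L i j


set_option linter.unusedSectionVars false
set_option maxHeartbeats 1000000

section Helpers

variable {α : Type*} [DecidableEq α]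

theorem my_insertIdx_eq (a : α) : ∀ (q : ℕ) (l : List α), q ≤ l.length →
    List.insertIdx l q a = l.take q ++ a :: l.drop q
  | 0, l, _ => by simp [List.insertIdx]
  | (q+1), [], h => by simp at h
  | (q+1), (x :: l), h => by
    rw [List.insertIdx_succ_cons, my_insertIdx_eq a q l (by simpa using h)]
    simp

theorem take_insertIdx_le (a : α) {q k : ℕ} {l : List α} (hk : k ≤ q) (hq : q ≤ l.length) :
    (List.insertIdx l q a).take k = l.take k := by
  rw [my_insertIdx_eq a q l hq, List.take_append, List.take_take,
    Nat.min_eq_left hk, List.length_take, Nat.min_eq_left hq,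
    Nat.sub_eq_zero_of_le hk, List.take_zero, List.append_nil]

theorem take_insertIdx_gt (a : α) {q k : ℕ} {l : List α} (hk : q < k) (hq : q ≤ l.length) :
    ((List.insertIdx l q a).take k).Perm (a :: l.take (k - 1)) := by
  rw [my_insertIdx_eq a q l hq, List.take_append, List.take_take,
    Nat.min_eq_right (by omega), List.length_take, Nat.min_eq_left hq]
  have h1 : k - q = (k - q - 1) + 1 := by omega
  rw [h1, List.take_succ_cons]
  refine (List.perm_middle).trans ?_
  have h2 : l.take q ++ (l.drop q).take (k - q - 1) = l.take (k - 1) := by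
    rw [← List.take_add]; congr 1; omega
  rw [h2]

theorem eraseIdx_take_le {r m : ℕ} {l : List α} (h : m ≤ r) :
    (l.eraseIdx r).take m = l.take m := by
  rw [List.eraseIdx_eq_take_drop_succ, List.take_append, List.take_take,
    Nat.min_eq_left h, List.length_take]
  rcases le_or_gt r l.length with hr | hr
  · rw [Nat.min_eq_left hr, Nat.sub_eq_zero_of_le h, List.take_zero, List.append_nil]
  · rw [Nat.min_eq_right (le_of_lt hr), List.drop_eq_nil_of_le (by omega)]
    simp

theorem eraseIdx_take_ge (d : α) {r m : ℕ} {l : List α} (hr : r < l.length) (h : r ≤ m) :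
    (l.take (m + 1)).Perm ((l.getD r d) :: (l.eraseIdx r).take m) := by
  rw [List.eraseIdx_eq_take_drop_succ, List.take_append, List.take_take,
    Nat.min_eq_right h, List.length_take, Nat.min_eq_left (le_of_lt hr)]
  have h2 : l.take (m+1) = l.take r ++ (l.drop r).take (m + 1 - r) := by
    rw [← List.take_add]; congr 1; omega
  rw [h2]
  have h3 : l.drop r = l[r] :: l.drop (r + 1) := by
    exact (List.drop_eq_getElem_cons hr)
  rw [h3, List.getD_eq_getElem l d hr]
  have h4 : m + 1 - r = (m - r) + 1 := by omega
  rw [h4, List.take_succ_cons]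
  exact List.perm_middle

/-- telescoping over `Ico`. -/
theorem tele_Ico (f : ℕ → ℝ) {a b : ℕ} (h : a ≤ b) :
    ∑ k ∈ Finset.Ico a b, (f k - f (k + 1)) = f a - f b := by
  rw [Finset.sum_Ico_eq_sub _ h, Finset.sum_range_sub' f, Finset.sum_range_sub' f]
  ring

/-- swapping a triangular double sum over `Ico`s. -/
theorem swap_tri (F : ℕ → ℕ → ℝ) (q n : ℕ) :
    ∑ k ∈ Finset.Ico q n, ∑ m ∈ Finset.Ico q (k + 1), F m k
      = ∑ m ∈ Finset.Ico q n, ∑ k ∈ Finset.Ico m n, F m k := by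
  calc ∑ k ∈ Finset.Ico q n, ∑ m ∈ Finset.Ico q (k + 1), F m k
      = ∑ k ∈ Finset.Ico q n, ∑ m ∈ Finset.Ico q n, if m ≤ k then F m k else 0 := by
        refine Finset.sum_congr rfl (fun k hk => ?_)
        simp only [Finset.mem_Ico] at hk
        rw [← Finset.sum_filter]
        refine Finset.sum_congr ?_ (fun _ _ => rfl)
        ext m
        simp only [Finset.mem_Ico, Finset.mem_filter]
        omega
    _ = ∑ m ∈ Finset.Ico q n, ∑ k ∈ Finset.Ico q n, if m ≤ k then F m k else 0 :=
        Finset.sum_comm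
    _ = ∑ m ∈ Finset.Ico q n, ∑ k ∈ Finset.Ico m n, F m k := by
        refine Finset.sum_congr rfl (fun m hm => ?_)
        simp only [Finset.mem_Ico] at hm
        rw [← Finset.sum_filter]
        refine Finset.sum_congr ?_ (fun _ _ => rfl)
        ext k
        simp only [Finset.mem_Ico, Finset.mem_filter]
        omega

end Helpers

section PrefMarg

variable {n : ℕ} {u : Finset (Fin n) → ℝ}

theorem prefSet_zero (L : List (Fin n)) : prefSet L 0 = ∅ := by simp [prefSet]

theorem prefSet_succ (L : List (Fin n)) (d : Fin n) {k : ℕ} (hk : k < L.length) :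
    prefSet L (k + 1) = insert (L.getD k d) (prefSet L k) := by
  ext x
  rw [List.getD_eq_getElem L d hk]
  simp only [prefSet, List.take_succ, List.getElem?_eq_getElem hk, Option.toList_some,
    List.toFinset_append, Finset.mem_union, List.mem_toFinset, List.toFinset_cons,
    List.toFinset_nil, Finset.mem_insert, List.mem_singleton, Finset.insert_empty,
    Finset.mem_singleton]
  tauto

theorem prefSet_mono (L : List (Fin n)) {j k : ℕ} (h : j ≤ k) :
    prefSet L j ⊆ prefSet L k := by
  intro x hx
  simp only [prefSet, List.mem_toFinset] at hx ⊢
  have : L.take j = (L.take k).take j := by rw [List.take_take, Nat.min_eq_left h]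
  rw [this] at hx
  exact (List.take_sublist _ _).subset hx

theorem prefSet_subset_univ (L : List (Fin n)) (k : ℕ) : prefSet L k ⊆ Finset.univ :=
  Finset.subset_univ _

theorem perm_length {L : List (Fin n)} (hL : IsPermList L) : L.length = n := by
  have h1 : L.toFinset = Finset.univ := by
    ext x; simp [List.mem_toFinset, hL.2 x]
  have h2 := List.toFinset_card_of_nodup hL.1
  rw [h1] at h2
  simpa using h2.symm

theorem prefSet_univ {L : List (Fin n)} (hL : IsPermList L) : prefSet L n = Finset.univ := by
  have h1 : L.take n = L := List.take_of_length_le (le_of_eq (perm_length hL))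
  unfold prefSet
  rw [h1]
  ext x; simp [List.mem_toFinset, hL.2 x]

theorem getD_not_mem_prefSet {L : List (Fin n)} (hL : L.Nodup) (d : Fin n) {k : ℕ}
    (hk : k < L.length) : L.getD k d ∉ prefSet L k := by
  rw [List.getD_eq_getElem L d hk]
  simp only [prefSet, List.mem_toFinset]
  intro hmem
  obtain ⟨i, hi, hieq⟩ := List.getElem_of_mem hmem
  rw [List.getElem_take] at hieq
  have hilt : i < k := by
    have := hi; rw [List.length_take] at this; omega
  have hii : i < L.length := by omega
  exact absurd (List.Nodup.getElem_inj_iff hL |>.mp hieq) (by omega)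

theorem getD_mem_prefSet {L : List (Fin n)} (d : Fin n) {r m : ℕ} (hr : r < m)
    (hm : m ≤ L.length) : L.getD r d ∈ prefSet L m := by
  have hrL : r < L.length := by omega
  rw [List.getD_eq_getElem L d hrL]
  simp only [prefSet, List.mem_toFinset]
  have h1 : r < (L.take m).length := by rw [List.length_take]; omega
  have : (L.take m)[r] = L[r] := List.getElem_take ..
  rw [← this]
  exact List.getElem_mem h1

theorem marg_nonneg (hm : Mono u) (e : Fin n) (S : Finset (Fin n)) : 0 ≤ marg u e S := by
  have := hm S e; simp only [marg]; linarith

theorem marg_mem {e : Fin n} {S : Finset (Fin n)} (he : e ∈ S) :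
    marg u e S = 0 := by
  simp [marg, Finset.insert_eq_self.2 he]

theorem mono_union (hm : Mono u) (S A : Finset (Fin n)) : u S ≤ u (S ∪ A) := by
  classical
  induction A using Finset.induction_on with
  | empty => simp
  | @insert a A ha ih =>
    rw [Finset.union_insert]
    exact le_trans ih (hm _ _)

theorem mono_subset (hm : Mono u) {S T : Finset (Fin n)} (h : S ⊆ T) : u S ≤ u T := by
  have := mono_union hm S (T \ S)
  rwa [Finset.union_sdiff_of_subset h] at this

theorem marg_insert_anti (hm : Mono u) (hs : Submod u) (a e : Fin n) (S : Finset (Fin n)) :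
    marg u e (insert a S) ≤ marg u e S := by
  by_cases he : e ∈ S
  · rw [marg_mem (Finset.mem_insert_of_mem he), marg_mem he]
  · by_cases ha : a ∈ S
    · rw [Finset.insert_eq_self.2 ha]
    · exact hs S e a he ha

theorem marg_union_anti (hm : Mono u) (hs : Submod u) (e : Fin n) (S A : Finset (Fin n)) :
    marg u e (S ∪ A) ≤ marg u e S := by
  classical
  induction A using Finset.induction_on with
  | empty => simp
  | @insert a A ha ih =>
    rw [Finset.union_insert]
    exact le_trans (marg_insert_anti hm hs _ _ _) ih

theorem marg_anti (hm : Mono u) (hs : Submod u) (e : Fin n) {S T : Finset (Fin n)}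
    (h : S ⊆ T) : marg u e T ≤ marg u e S := by
  have := marg_union_anti hm hs e S (T \ S)
  rwa [Finset.union_sdiff_of_subset h] at this

end PrefMarg

section Strip

variable {n : ℕ} {u : Finset (Fin n) → ℝ} {cs : Fin n → ℝ} {c : Finset (Fin n) → ℝ}

theorem sos_strip (hm : Mono u) (hs : Submod u) (hsos : SOSupermod u)
    (A : Finset (Fin n)) (S : Finset (Fin n)) (e l : Fin n) :
    marg u e (S ∪ A) - marg u e (insert l (S ∪ A)) ≤ marg u e S - marg u e (insert l S) := by
  classical
  induction A using Finset.induction_on with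
  | empty => simp
  | @insert a A ha ih =>
    rw [Finset.union_insert]
    refine le_trans ?_ ih
    set T := S ∪ A with hT
    by_cases haT : a ∈ T
    · rw [Finset.insert_eq_self.2 haT]
    · by_cases heT : e ∈ T
      · have h1 : marg u e (insert a T) = 0 := marg_mem (Finset.mem_insert_of_mem heT)
        have h2 : marg u e (insert l (insert a T)) = 0 :=
          marg_mem (Finset.mem_insert_of_mem (Finset.mem_insert_of_mem heT))
        have h3 : marg u e T = 0 := marg_mem heT
        have h4 : marg u e (insert l T) = 0 := marg_mem (Finset.mem_insert_of_mem heT)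
        linarith
      · by_cases hlT : l ∈ T
        · rw [Finset.insert_eq_self.2 (Finset.mem_insert_of_mem hlT)]
          have := marg_insert_anti hm hs l e T
          linarith
        · exact hsos T e l a heT hlT haT

theorem csum_nonneg (hcs : ∀ i, 0 < cs i) (l : List (Fin n)) : 0 ≤ (l.map cs).sum := by
  apply List.sum_nonneg
  intro x hx
  obtain ⟨y, _, rfl⟩ := List.mem_map.1 hx
  exact le_of_lt (hcs y)

theorem csum_take_succ (cs : Fin n → ℝ) (L : List (Fin n)) (d : Fin n) {k : ℕ}
    (hk : k < L.length) :
    ((L.take (k+1)).map cs).sum = ((L.take k).map cs).sum + cs (L.getD k d) := by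
  rw [List.take_succ, List.getElem?_eq_getElem hk, List.getD_eq_getElem L d hk,
    List.map_append, List.sum_append]
  simp

theorem csum_take_eq_sum_range (cs : Fin n → ℝ) (L : List (Fin n)) (d : Fin n) :
    ∀ {k : ℕ}, k ≤ L.length → ((L.take k).map cs).sum = ∑ m ∈ Finset.range k, cs (L.getD m d)
  | 0, _ => by simp
  | (k+1), h => by
    rw [csum_take_succ cs L d (by omega), Finset.sum_range_succ,
      csum_take_eq_sum_range cs L d (by omega)]

theorem csum_take_mono (hcs : ∀ i, 0 < cs i) (L : List (Fin n)) {j k : ℕ} (h : j ≤ k) :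
    ((L.take j).map cs).sum ≤ ((L.take k).map cs).sum := by
  have h1 : L.take j = (L.take k).take j := by rw [List.take_take, Nat.min_eq_left h]
  have h2 : List.Sublist ((L.take j).map cs) ((L.take k).map cs) := by
    rw [h1]; exact ((List.take_sublist _ _).map cs)
  refine List.Sublist.sum_le_sum h2 ?_
  intro x hx
  obtain ⟨y, _, rfl⟩ := List.mem_map.1 hx
  exact le_of_lt (hcs y)

theorem c_prefSet (hc : ∀ S, c S = ∑ i ∈ S, cs i) {L : List (Fin n)} (hnd : L.Nodup)
    (k : ℕ) : c (prefSet L k) = ((L.take k).map cs).sum := by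
  rw [hc, prefSet, List.sum_toFinset _ (hnd.sublist (List.take_sublist _ _))]

theorem c_toFinset_le (hc : ∀ S, c S = ∑ i ∈ S, cs i) (hcs : ∀ i, 0 < cs i)
    (l : List (Fin n)) : c l.toFinset ≤ (l.map cs).sum := by
  induction l with
  | nil => simp [hc]
  | cons a l ih =>
    rw [List.toFinset_cons, List.map_cons, List.sum_cons]
    by_cases ha : a ∈ l.toFinset
    · rw [Finset.insert_eq_self.2 ha]
      have := hcs a; linarith
    · rw [hc, Finset.sum_insert ha, ← hc]
      have := hcs a; linarith

end Strip

section ObjRw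

variable {n : ℕ} {u : Finset (Fin n) → ℝ} {cs : Fin n → ℝ} {c : Finset (Fin n) → ℝ}

theorem tele_Ico' (f : ℕ → ℝ) {a b : ℕ} (h : a ≤ b) :
    ∑ k ∈ Finset.Ico a b, (f (k + 1) - f k) = f b - f a := by
  have := tele_Ico (fun k => -(f k)) h
  simp only [neg_sub_neg] at this
  have h2 : ∀ k, f (k+1) - f k = -(f k) - -(f (k+1)) := fun k => by ring
  calc ∑ k ∈ Finset.Ico a b, (f (k + 1) - f k)
      = ∑ k ∈ Finset.Ico a b, (-(f k) - -(f (k+1))) := by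
        exact Finset.sum_congr rfl (fun k _ => h2 k)
    _ = f b - f a := by rw [tele_Ico (fun k => -(f k)) h]; ring

theorem swap_tri_range (F : ℕ → ℕ → ℝ) (n : ℕ) :
    ∑ k ∈ Finset.range n, ∑ m ∈ Finset.range (k + 1), F m k
      = ∑ m ∈ Finset.range n, ∑ k ∈ Finset.Ico m n, F m k := by
  have := swap_tri F 0 n
  simpa [← Finset.range_eq_Ico] using this

theorem obj_eq2 (hc : ∀ S, c S = ∑ i ∈ S, cs i) {L : List (Fin n)} (hL : IsPermList L)
    (d : Fin n) :
    objective u c L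
      = ∑ m ∈ Finset.range n, cs (L.getD m d) * (u Finset.univ - u (prefSet L m)) := by
  have hlen : L.length = n := perm_length hL
  unfold objective
  rw [hlen]
  have step1 : ∀ i ∈ Finset.range n,
      c (prefSet L (i+1)) * (u (prefSet L (i+1)) - u (prefSet L i))
        = ∑ m ∈ Finset.range (i+1), cs (L.getD m d) * (u (prefSet L (i+1)) - u (prefSet L i)) := by
    intro i hi
    simp only [Finset.mem_range] at hi
    rw [c_prefSet hc hL.1, csum_take_eq_sum_range cs L d (by omega), Finset.sum_mul]
  rw [Finset.sum_congr rfl step1, swap_tri_range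
    (fun m k => cs (L.getD m d) * (u (prefSet L (k+1)) - u (prefSet L k))) n]
  refine Finset.sum_congr rfl (fun m hm => ?_)
  simp only [Finset.mem_range] at hm
  rw [← Finset.mul_sum, tele_Ico' (fun k => u (prefSet L k)) (le_of_lt hm),
    prefSet_univ hL]

end ObjRw

section Bmatrix

variable {n : ℕ} {u : Finset (Fin n) → ℝ} {cs : Fin n → ℝ} {c : Finset (Fin n) → ℝ}

/-- `g_t(S) = u(o_t | O_t ∪ S)` (0-indexed `t`). -/
noncomputable def gfun (u : Finset (Fin n) → ℝ) (O : List (Fin n)) (d : Fin n) (t : ℕ)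
    (S : Finset (Fin n)) : ℝ := marg u (O.getD t d) (prefSet O t ∪ S)

/-- 0-indexed version of the `b` matrix. -/
noncomputable def BB (u : Finset (Fin n) → ℝ) (L O : List (Fin n)) (d : Fin n) (t k : ℕ) : ℝ :=
  gfun u O d t (prefSet L k) - gfun u O d t (prefSet L (k + 1))

theorem gfun_univ (O : List (Fin n)) (d : Fin n) (t : ℕ) :
    gfun u O d t Finset.univ = 0 := by
  unfold gfun
  have h1 : prefSet O t ∪ Finset.univ = Finset.univ := by simp
  rw [h1]
  exact marg_mem (Finset.mem_univ _)

theorem B_rowsum {L O : List (Fin n)} (hL : IsPermList L) (d : Fin n) (t : ℕ) :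
    ∑ k ∈ Finset.range n, BB u L O d t k = marg u (O.getD t d) (prefSet O t) := by
  unfold BB
  rw [Finset.sum_range_sub' (fun k => gfun u O d t (prefSet L k))]
  rw [prefSet_univ hL, gfun_univ, prefSet_zero]
  unfold gfun
  rw [Finset.union_empty, sub_zero]

theorem B_colsum {O : List (Fin n)} (hO : IsPermList O) (d : Fin n) (S : Finset (Fin n)) :
    ∑ t ∈ Finset.range n, gfun u O d t S = u Finset.univ - u S := by
  have hlen : O.length = n := perm_length hO
  have step : ∀ t ∈ Finset.range n,
      gfun u O d t S = u (prefSet O (t+1) ∪ S) - u (prefSet O t ∪ S) := by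
    intro t ht
    simp only [Finset.mem_range] at ht
    unfold gfun marg
    rw [prefSet_succ O d (by omega), Finset.insert_union]
  rw [Finset.sum_congr rfl step,
    Finset.sum_range_sub (fun t => u (prefSet O t ∪ S))]
  rw [prefSet_univ hO, prefSet_zero]
  have h1 : (Finset.univ : Finset (Fin n)) ∪ S = Finset.univ := by simp
  have h2 : (∅ : Finset (Fin n)) ∪ S = S := by simp
  rw [h1, h2]

theorem B_tail {L O : List (Fin n)} (hL : IsPermList L) (d : Fin n) (t : ℕ) {j : ℕ}
    (hj : j ≤ n) :
    ∑ k ∈ Finset.Ico j n, BB u L O d t k = gfun u O d t (prefSet L j) := by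
  unfold BB
  rw [tele_Ico (fun k => gfun u O d t (prefSet L k)) hj, prefSet_univ hL, gfun_univ, sub_zero]

theorem B_nonneg (hm : Mono u) (hs : Submod u) {L O : List (Fin n)} (hL : IsPermList L)
    (d : Fin n) (t : ℕ) {k : ℕ} (hk : k < n) : 0 ≤ BB u L O d t k := by
  unfold BB gfun
  rw [prefSet_succ L d (by rw [perm_length hL]; omega), Finset.union_insert]
  have := marg_insert_anti hm hs (L.getD k d) (O.getD t d) (prefSet O t ∪ prefSet L k)
  linarith

theorem B_le_beta (hm : Mono u) (hs : Submod u) (hsos : SOSupermod u) {L O : List (Fin n)}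
    (hL : IsPermList L) (d : Fin n) (t : ℕ) {k : ℕ} (hk : k < n) :
    BB u L O d t k
      ≤ marg u (O.getD t d) (prefSet L k) - marg u (O.getD t d) (prefSet L (k + 1)) := by
  have hins : prefSet L (k+1) = insert (L.getD k d) (prefSet L k) :=
    prefSet_succ L d (by rw [perm_length hL]; omega)
  unfold BB gfun
  rw [hins, Finset.union_insert, Finset.union_comm (prefSet O t) (prefSet L k)]
  exact sos_strip hm hs hsos (prefSet O t) (prefSet L k) (O.getD t d) (L.getD k d)

theorem B_tail_le (hm : Mono u) (hs : Submod u) (hsos : SOSupermod u) {L O : List (Fin n)}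
    (hL : IsPermList L) (d : Fin n) (t : ℕ) {m : ℕ} (hmn : m ≤ n) :
    ∑ k ∈ Finset.Ico m n, BB u L O d t k ≤ marg u (O.getD t d) (prefSet L m) := by
  have h1 : ∑ k ∈ Finset.Ico m n, BB u L O d t k
      ≤ ∑ k ∈ Finset.Ico m n,
          (marg u (O.getD t d) (prefSet L k) - marg u (O.getD t d) (prefSet L (k+1))) := by
    refine Finset.sum_le_sum (fun k hk => ?_)
    simp only [Finset.mem_Ico] at hk
    exact B_le_beta hm hs hsos hL d t hk.2
  refine le_trans h1 ?_
  rw [tele_Ico (fun k => marg u (O.getD t d) (prefSet L k)) hmn, prefSet_univ hL,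
    marg_mem (Finset.mem_univ _), sub_zero]

end Bmatrix

section StarStar

variable {n : ℕ} {u : Finset (Fin n) → ℝ} {cs : Fin n → ℝ} {c : Finset (Fin n) → ℝ}

theorem starstar (hc : ∀ S, c S = ∑ i ∈ S, cs i) {L : List (Fin n)} (hL : IsPermList L)
    (d : Fin n) {q r : ℕ} (hqr : q < r) (hr : r < n) :
    objective u c L - pseudoObj u cs (L.insertIdx q (L.getD r d)) =
      (∑ m ∈ Finset.Ico q n, cs (L.getD m d) *
        (u (insert (L.getD r d) (prefSet L m)) - u (prefSet L m)))
        - cs (L.getD r d) * (u Finset.univ - u (prefSet L q)) := by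
  have hlen : L.length = n := perm_length hL
  set e := L.getD r d with he
  set P := L.insertIdx q e with hP
  have hqn : q ≤ n := by omega
  have hqL : q ≤ L.length := by omega
  have hPlen : P.length = n + 1 := by rw [hP, List.length_insertIdx_of_le_length hqL, hlen]
  -- abbreviations
  set cA : ℕ → ℝ := fun m => ((L.take m).map cs).sum with hcA
  set v : ℕ → ℝ := fun m => u (insert e (prefSet L m)) with hv
  set A : ℕ → ℝ := fun k => cA (k+1) * (u (prefSet L (k+1)) - u (prefSet L k)) with hA
  set A' : ℕ → ℝ :=
    fun k => ((P.take (k+1)).map cs).sum * (u (prefSet P (k+1)) - u (prefSet P k)) with hA'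
  set ψ : ℕ → ℝ :=
    fun m => cA m * (v m - u (prefSet L m)) + cs e * v m with hψ
  -- prefix facts
  have htake_le : ∀ {k : ℕ}, k ≤ q → P.take k = L.take k := by
    intro k hk; exact take_insertIdx_le _ hk hqL
  have htake_gt : ∀ {k : ℕ}, q < k → ((P.take k).map cs).sum = cs e + cA (k-1) ∧
      prefSet P k = insert e (prefSet L (k-1)) := by
    intro k hk
    have hperm := take_insertIdx_gt e hk hqL
    constructor
    · rw [(hperm.map cs).sum_eq]; simp [hcA]
    · unfold prefSet
      rw [List.toFinset_eq_of_perm _ _ hperm, List.toFinset_cons]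
  -- objective decomposition
  have hobj : objective u c L = ∑ k ∈ Finset.range q, A k + ∑ k ∈ Finset.Ico q n, A k := by
    unfold objective
    rw [hlen, Finset.range_eq_Ico, ← Finset.sum_Ico_consecutive _ (Nat.zero_le q) (by omega),
      ← Finset.range_eq_Ico]
    congr 1
    all_goals {
      refine Finset.sum_congr rfl (fun k hk => ?_)
      rw [hA, c_prefSet hc hL.1, hcA] }
  -- pseudo decomposition
  have hpse : pseudoObj u cs P
      = ∑ k ∈ Finset.range q, A' k + A' q + ∑ k ∈ Finset.Ico q n, A' (k+1) := by
    unfold pseudoObj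
    rw [hPlen, Finset.range_eq_Ico, ← Finset.sum_Ico_consecutive _ (Nat.zero_le q) (by omega),
      ← Finset.range_eq_Ico, Finset.sum_eq_sum_Ico_succ_bot (by omega : q < n + 1)]
    have hshift : ∑ k ∈ Finset.Ico (q+1) (n+1), A' k = ∑ k ∈ Finset.Ico q n, A' (k+1) := by
      rw [Finset.sum_Ico_eq_sum_range, Finset.sum_Ico_eq_sum_range]
      have : n + 1 - (q + 1) = n - q := by omega
      rw [this]
      exact Finset.sum_congr rfl (fun i _ => by rw [show q + 1 + i = q + i + 1 by omega])
    rw [hshift, add_assoc]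
  -- agreement on the first q terms
  have hagree : ∑ k ∈ Finset.range q, A' k = ∑ k ∈ Finset.range q, A k := by
    refine Finset.sum_congr rfl (fun k hk => ?_)
    simp only [Finset.mem_range] at hk
    have h1 : P.take (k+1) = L.take (k+1) := htake_le (by omega)
    have h2 : prefSet P (k+1) = prefSet L (k+1) := by unfold prefSet; rw [h1]
    have h3 : prefSet P k = prefSet L k := by
      unfold prefSet; rw [htake_le (by omega)]
    simp only [hA', hA, hcA]
    rw [h1, h2, h3]
  -- the q-th pseudo term
  have hA'q : A' q = (cs e + cA q) * (v q - u (prefSet L q)) := by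
    obtain ⟨hw, hps⟩ := htake_gt (show q < q + 1 by omega)
    simp only [Nat.add_sub_cancel] at hw hps
    have h3 : prefSet P q = prefSet L q := by unfold prefSet; rw [htake_le (le_refl q)]
    simp only [hA', hv]
    rw [hw, hps, h3]
  -- the shifted pseudo terms
  have hA'succ : ∀ k ∈ Finset.Ico q n, A' (k+1) = (cs e + cA (k+1)) * (v (k+1) - v k) := by
    intro k hk
    simp only [Finset.mem_Ico] at hk
    obtain ⟨hw, hps⟩ := htake_gt (show q < k + 2 by omega)
    obtain ⟨_, hps'⟩ := htake_gt (show q < k + 1 by omega)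
    simp only [Nat.add_sub_cancel] at hw hps hps'
    simp only [hA', hv]
    rw [hw, hps, hps']
    norm_num
  -- termwise identity
  have hterm : ∀ k ∈ Finset.Ico q n,
      A k - A' (k+1) = cs (L.getD k d) * (v k - u (prefSet L k)) + (ψ k - ψ (k+1)) := by
    intro k hk
    simp only [Finset.mem_Ico] at hk
    rw [hA'succ k (by simp only [Finset.mem_Ico]; omega)]
    have hsucc : cA (k+1) = cA k + cs (L.getD k d) := by
      simp only [hcA]; exact csum_take_succ cs L d (by rw [hlen]; omega)
    simp only [hA, hψ]
    rw [hsucc]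
    ring
  -- telescoping
  have hΔ : ∑ k ∈ Finset.Ico q n, A k - ∑ k ∈ Finset.Ico q n, A' (k+1)
      = ∑ k ∈ Finset.Ico q n, cs (L.getD k d) * (v k - u (prefSet L k)) + (ψ q - ψ n) := by
    rw [← Finset.sum_sub_distrib, Finset.sum_congr rfl hterm, Finset.sum_add_distrib,
      tele_Ico ψ hqn]
  -- values at n
  have hLPn : prefSet L n = Finset.univ := prefSet_univ hL
  have hvn : v n = u Finset.univ := by
    simp only [hv, hLPn]
    congr 1
    simp
  have hψn : ψ n = cs e * u Finset.univ := by
    simp only [hψ]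
    rw [hvn, hLPn]; ring
  have hψq : ψ q = cA q * (v q - u (prefSet L q)) + cs e * v q := by simp only [hψ]
  -- final assembly
  rw [hobj, hpse, hagree]
  have hgoalsum : ∑ m ∈ Finset.Ico q n, cs (L.getD m d) *
        (u (insert (L.getD r d) (prefSet L m)) - u (prefSet L m))
      = ∑ m ∈ Finset.Ico q n, cs (L.getD m d) * (v m - u (prefSet L m)) := by
    refine Finset.sum_congr rfl (fun m _ => ?_)
    rw [hv, ← he]
  rw [hgoalsum]
  linear_combination hΔ - hA'q + hψq - hψn

end StarStar

section Diamond

variable {n : ℕ} [NeZero n] {u : Finset (Fin n) → ℝ} {cs : Fin n → ℝ} {c : Finset (Fin n) → ℝ}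

theorem diamond (hc : ∀ S, c S = ∑ i ∈ S, cs i) (hm : Mono u) (hcs : ∀ i, 0 < cs i)
    {L : List (Fin n)} (hL : IsPermList L) {D : ℝ} (hD : 0 ≤ D)
    (hloc : ∀ i j : ℕ, 1 ≤ j → j < i → i ≤ n →
      objective u c L - pseudoObj u cs (pseudoNeighbor L i j) ≤ D)
    (e : Fin n) {q : ℕ} (hq : q ≤ n) :
    ∑ m ∈ Finset.Ico q n, cs (L.getD m default) * marg u e (prefSet L m)
      ≤ cs e * (u Finset.univ - u (prefSet L q)) + D := by
  have hlen : L.length = n := perm_length hL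
  obtain ⟨r, hrlen, hre⟩ := List.mem_iff_getElem.1 (hL.2 e)
  have hrn : r < n := by omega
  have hed : e = L.getD r default := by rw [List.getD_eq_getElem L _ hrlen, hre]
  have hRHS0 : 0 ≤ cs e * (u Finset.univ - u (prefSet L q)) + D := by
    have h1 : u (prefSet L q) ≤ u Finset.univ := mono_subset hm (Finset.subset_univ _)
    have h2 := le_of_lt (hcs e)
    have := mul_nonneg h2 (by linarith : (0:ℝ) ≤ u Finset.univ - u (prefSet L q))
    linarith
  have hzero : ∀ m ∈ Finset.Ico q n, r < m →
      cs (L.getD m default) * marg u e (prefSet L m) = 0 := by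
    intro m hmem hrm
    simp only [Finset.mem_Ico] at hmem
    rw [hed, marg_mem (getD_mem_prefSet default hrm (by omega)), mul_zero]
  rcases lt_trichotomy q r with hlt | heq | hgt
  · -- use the local-optimality hypothesis via `starstar`
    have h := hloc (r+1) (q+1) (by omega) (by omega) (by omega)
    have hpn : pseudoNeighbor L (r+1) (q+1) = L.insertIdx q (L.getD r default) := by
      unfold pseudoNeighbor elemAt
      norm_num
    rw [hpn] at h
    have hss := starstar (u := u) hc hL default hlt hrn
    have hconv : ∑ m ∈ Finset.Ico q n, cs (L.getD m default) * marg u e (prefSet L m)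
        = ∑ m ∈ Finset.Ico q n, cs (L.getD m default) *
            (u (insert (L.getD r default) (prefSet L m)) - u (prefSet L m)) := by
      refine Finset.sum_congr rfl (fun m _ => ?_)
      rw [hed]
      rfl
    rw [hconv, hed]
    linarith
  · -- q = r : only the first term survives
    subst heq
    rw [Finset.sum_eq_sum_Ico_succ_bot (by omega : q < n)]
    have htail : ∑ m ∈ Finset.Ico (q+1) n, cs (L.getD m default) * marg u e (prefSet L m)
        = 0 := by
      refine Finset.sum_eq_zero (fun m hmem => ?_)
      simp only [Finset.mem_Ico] at hmem
      exact hzero m (by simp only [Finset.mem_Ico]; omega) (by omega)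
    rw [htail, add_zero]
    have hmarg : marg u e (prefSet L q) ≤ u Finset.univ - u (prefSet L q) := by
      unfold marg
      have : u (insert e (prefSet L q)) ≤ u Finset.univ :=
        mono_subset hm (Finset.subset_univ _)
      linarith
    have h1 : cs (L.getD q default) * marg u e (prefSet L q)
        ≤ cs e * (u Finset.univ - u (prefSet L q)) := by
      rw [← hed]
      exact mul_le_mul_of_nonneg_left hmarg (le_of_lt (hcs e))
    linarith
  · -- q > r : all terms vanish
    have hall : ∑ m ∈ Finset.Ico q n, cs (L.getD m default) * marg u e (prefSet L m) = 0 :=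
      Finset.sum_eq_zero (fun m hmem => hzero m hmem
        (by simp only [Finset.mem_Ico] at hmem; omega))
    rw [hall]
    exact hRHS0

end Diamond

section Core

variable {n : ℕ} [NeZero n] {u : Finset (Fin n) → ℝ} {cs : Fin n → ℝ} {c : Finset (Fin n) → ℝ}

theorem core_bound (hc : ∀ S, c S = ∑ i ∈ S, cs i) (hm : Mono u) (hs : Submod u)
    (hsos : SOSupermod u) (hcs : ∀ i, 0 < cs i)
    {L O : List (Fin n)} (hL : IsPermList L) (hO : IsPermList O) {D : ℝ} (hD : 0 ≤ D)
    (hloc : ∀ i j : ℕ, 1 ≤ j → j < i → i ≤ n →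
      objective u c L - pseudoObj u cs (pseudoNeighbor L i j) ≤ D) :
    objective u c L ≤ 4 * objective u c O + 2 * n * D := by
  classical
  have hlenL : L.length = n := perm_length hL
  have hlenO : O.length = n := perm_length hO
  set d : Fin n := default with hd
  set cAL : ℕ → ℝ := fun m => ((L.take m).map cs).sum with hcAL
  set cAO : ℕ → ℝ := fun m => ((O.take m).map cs).sum with hcAO
  -- the inner sums of the B matrix
  have hUB : ∀ {j : ℕ}, j ≤ n →
      u Finset.univ - u (prefSet L j)
        = ∑ t ∈ Finset.range n, ∑ k ∈ Finset.Ico j n, BB u L O d t k := by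
    intro j hj
    have h1 : ∀ t ∈ Finset.range n, ∑ k ∈ Finset.Ico j n, BB u L O d t k
        = gfun u O d t (prefSet L j) := fun t _ => B_tail hL d t hj
    rw [Finset.sum_congr rfl h1, B_colsum hO d (prefSet L j)]
  -- clubs inequality
  have hclubs : ∀ (t : ℕ) {q : ℕ}, q ≤ n →
      ∑ k ∈ Finset.Ico q n, (cAL (k+1) - cAL q) * BB u L O d t k
        ≤ cs (O.getD t d) * (u Finset.univ - u (prefSet L q)) + D := by
    intro t q hq
    have hstep1 : ∀ k ∈ Finset.Ico q n, (cAL (k+1) - cAL q) * BB u L O d t k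
        = ∑ m ∈ Finset.Ico q (k+1), cs (L.getD m d) * BB u L O d t k := by
      intro k hk
      simp only [Finset.mem_Ico] at hk
      have hdiff : cAL (k+1) - cAL q = ∑ m ∈ Finset.Ico q (k+1), cs (L.getD m d) := by
        simp only [hcAL]
        rw [csum_take_eq_sum_range cs L d (by omega : k+1 ≤ L.length),
          csum_take_eq_sum_range cs L d (by omega : q ≤ L.length),
          Finset.sum_Ico_eq_sub _ (by omega : q ≤ k+1)]
      rw [hdiff, Finset.sum_mul]
    rw [Finset.sum_congr rfl hstep1,
      swap_tri (fun m k => cs (L.getD m d) * BB u L O d t k) q n]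
    have hstep2 : ∀ m ∈ Finset.Ico q n,
        ∑ k ∈ Finset.Ico m n, cs (L.getD m d) * BB u L O d t k
          ≤ cs (L.getD m d) * marg u (O.getD t d) (prefSet L m) := by
      intro m hmem
      simp only [Finset.mem_Ico] at hmem
      rw [← Finset.mul_sum]
      exact mul_le_mul_of_nonneg_left (B_tail_le hm hs hsos hL d t (by omega))
        (le_of_lt (hcs _))
    refine le_trans (Finset.sum_le_sum hstep2) ?_
    exact diamond hc hm hcs hL hD hloc (O.getD t d) hq
  -- spades inequality
  have hspades : ∀ (t : ℕ) {q : ℕ}, q ≤ n →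
      ∑ k ∈ Finset.range n, cAL (k+1) * BB u L O d t k
        ≤ cAL q * marg u (O.getD t d) (prefSet O t)
          + cs (O.getD t d) * (u Finset.univ - u (prefSet L q)) + D := by
    intro t q hq
    have hsplit : ∑ k ∈ Finset.range n, cAL (k+1) * BB u L O d t k
        = ∑ k ∈ Finset.Ico 0 q, cAL (k+1) * BB u L O d t k
          + ∑ k ∈ Finset.Ico q n, cAL (k+1) * BB u L O d t k := by
      rw [Finset.sum_Ico_consecutive _ (Nat.zero_le q) hq, ← Finset.range_eq_Ico]
    have h1 : ∑ k ∈ Finset.Ico 0 q, cAL (k+1) * BB u L O d t k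
        ≤ ∑ k ∈ Finset.Ico 0 q, cAL q * BB u L O d t k := by
      refine Finset.sum_le_sum (fun k hk => ?_)
      simp only [Finset.mem_Ico] at hk
      refine mul_le_mul_of_nonneg_right ?_ (B_nonneg hm hs hL d t (by omega))
      simp only [hcAL]
      exact csum_take_mono hcs L (by omega)
    have h2 : ∑ k ∈ Finset.Ico q n, cAL (k+1) * BB u L O d t k
        = ∑ k ∈ Finset.Ico q n, (cAL (k+1) - cAL q) * BB u L O d t k
          + ∑ k ∈ Finset.Ico q n, cAL q * BB u L O d t k := by
      rw [← Finset.sum_add_distrib]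
      exact Finset.sum_congr rfl (fun k _ => by ring)
    have h3 : ∑ k ∈ Finset.Ico 0 q, cAL q * BB u L O d t k
          + ∑ k ∈ Finset.Ico q n, cAL q * BB u L O d t k
        = cAL q * marg u (O.getD t d) (prefSet O t) := by
      rw [← Finset.mul_sum, ← Finset.mul_sum, ← mul_add,
        Finset.sum_Ico_consecutive _ (Nat.zero_le q) hq, ← Finset.range_eq_Ico,
        B_rowsum hL d t]
    have h4 := hclubs t hq
    linarith
  -- the choice of q(t)
  have hcAL0 : cAL 0 = 0 := by simp [hcAL]
  have hcALnn : ∀ m, 0 ≤ cAL m := fun m => csum_nonneg hcs _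
  have hcAOnn : ∀ m, 0 ≤ cAO m := fun m => csum_nonneg hcs _
  set F : ℕ → Finset ℕ :=
    fun t => (Finset.range (n+1)).filter (fun q => cAL q ≤ 2 * cAO (t+1)) with hF
  have hFne : ∀ t, (F t).Nonempty := by
    intro t
    refine ⟨0, ?_⟩
    simp only [hF, Finset.mem_filter, Finset.mem_range]
    constructor
    · omega
    · rw [hcAL0]; have := hcAOnn (t+1); linarith
  set Q : ℕ → ℕ := fun t => (F t).max' (hFne t) with hQ
  have hQmem : ∀ t, Q t ∈ F t := fun t => (F t).max'_mem (hFne t)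
  have hQ1 : ∀ t, Q t ≤ n := by
    intro t
    have := hQmem t
    simp only [hF, Finset.mem_filter, Finset.mem_range] at this
    omega
  have hQ2 : ∀ t, cAL (Q t) ≤ 2 * cAO (t+1) := by
    intro t
    have := hQmem t
    simp only [hF, Finset.mem_filter, Finset.mem_range] at this
    exact this.2
  have hQ3 : ∀ t k, k < n → Q t ≤ k → 2 * cAO (t+1) < cAL (k+1) := by
    intro t k hk hQk
    by_contra hcon
    push_neg at hcon
    have hmem : k + 1 ∈ F t := by
      simp only [hF, Finset.mem_filter, Finset.mem_range]
      exact ⟨by omega, hcon⟩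
    have hle : k + 1 ≤ Q t := by
      simp only [hQ]
      exact Finset.le_max' (F t) (k+1) hmem
    omega
  -- E1 : objective L in terms of the B matrix
  have hE1 : objective u c L
      = ∑ t ∈ Finset.range n, ∑ k ∈ Finset.range n, cAL (k+1) * BB u L O d t k := by
    rw [obj_eq2 hc hL d]
    have hstep : ∀ m ∈ Finset.range n,
        cs (L.getD m d) * (u Finset.univ - u (prefSet L m))
          = ∑ k ∈ Finset.Ico m n, cs (L.getD m d) * (∑ t ∈ Finset.range n, BB u L O d t k) := by
      intro m hmem
      simp only [Finset.mem_range] at hmem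
      rw [hUB (by omega : m ≤ n), Finset.sum_comm, ← Finset.mul_sum]
    rw [Finset.sum_congr rfl hstep, ← swap_tri_range
      (fun m k => cs (L.getD m d) * (∑ t ∈ Finset.range n, BB u L O d t k)) n]
    have hL1 : ∀ k ∈ Finset.range n,
        ∑ m ∈ Finset.range (k+1), cs (L.getD m d) * (∑ t ∈ Finset.range n, BB u L O d t k)
          = cAL (k+1) * (∑ t ∈ Finset.range n, BB u L O d t k) := by
      intro k hk
      simp only [Finset.mem_range] at hk
      rw [← Finset.sum_mul]
      congr 1
      simp only [hcAL]
      rw [csum_take_eq_sum_range cs L d (by omega : k + 1 ≤ L.length)]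
    rw [Finset.sum_congr rfl hL1, Finset.sum_comm]
    exact Finset.sum_congr rfl (fun k _ => Finset.mul_sum _ _ _)
  -- E2 : objective O in terms of marginals
  have hE2 : objective u c O
      = ∑ t ∈ Finset.range n, cAO (t+1) * marg u (O.getD t d) (prefSet O t) := by
    unfold objective
    rw [hlenO]
    refine Finset.sum_congr rfl (fun t ht => ?_)
    simp only [Finset.mem_range] at ht
    rw [c_prefSet hc hO.1]
    unfold marg
    rw [prefSet_succ O d (by omega : t < O.length)]
  -- rewriting Ico sums as ite sums over range
  have hIco : ∀ {j : ℕ}, j ≤ n → ∀ t', ∑ k ∈ Finset.Ico j n, BB u L O d t' k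
      = ∑ k ∈ Finset.range n, if j ≤ k then BB u L O d t' k else 0 := by
    intro j hj t'
    rw [← Finset.sum_filter]
    refine Finset.sum_congr ?_ (fun _ _ => rfl)
    ext k
    simp only [Finset.mem_Ico, Finset.mem_filter, Finset.mem_range]
    omega
  -- the weight bound
  have hW : ∑ t ∈ Finset.range n, cs (O.getD t d) * (u Finset.univ - u (prefSet L (Q t)))
      ≤ (∑ t ∈ Finset.range n, ∑ k ∈ Finset.range n, cAL (k+1) * BB u L O d t k) / 2 := by
    have hstep1 : ∀ t ∈ Finset.range n,
        cs (O.getD t d) * (u Finset.univ - u (prefSet L (Q t)))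
          = ∑ t' ∈ Finset.range n, ∑ k ∈ Finset.range n,
              (if Q t ≤ k then cs (O.getD t d) else 0) * BB u L O d t' k := by
      intro t _
      rw [hUB (hQ1 t), Finset.mul_sum]
      refine Finset.sum_congr rfl (fun t' _ => ?_)
      rw [hIco (hQ1 t) t', Finset.mul_sum]
      refine Finset.sum_congr rfl (fun k _ => ?_)
      split_ifs with h
      · rfl
      · simp
    rw [Finset.sum_congr rfl hstep1]
    have hstep2 : ∀ t' ∈ Finset.range n,
        ∑ t ∈ Finset.range n, ∑ k ∈ Finset.range n,
            (if Q t ≤ k then cs (O.getD t d) else 0) * BB u L O d t' k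
          = ∑ k ∈ Finset.range n,
              (∑ t ∈ Finset.range n, if Q t ≤ k then cs (O.getD t d) else 0)
                * BB u L O d t' k := by
      intro t' _
      rw [Finset.sum_comm]
      exact Finset.sum_congr rfl (fun k _ => by rw [Finset.sum_mul])
    rw [Finset.sum_comm, Finset.sum_congr rfl hstep2]
    have hWk : ∀ k ∈ Finset.range n,
        (∑ t ∈ Finset.range n, if Q t ≤ k then cs (O.getD t d) else 0) ≤ cAL (k+1) / 2 := by
      intro k hk
      simp only [Finset.mem_range] at hk
      rw [← Finset.sum_filter]
      have hsub : (Finset.range n).filter (fun t => Q t ≤ k)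
          ⊆ (Finset.range n).filter (fun t => 2 * cAO (t+1) < cAL (k+1)) := by
        intro t ht
        simp only [Finset.mem_filter] at ht ⊢
        exact ⟨ht.1, hQ3 t k hk ht.2⟩
      have h1 : ∑ t ∈ (Finset.range n).filter (fun t => Q t ≤ k), cs (O.getD t d)
          ≤ ∑ t ∈ (Finset.range n).filter (fun t => 2 * cAO (t+1) < cAL (k+1)),
              cs (O.getD t d) :=
        Finset.sum_le_sum_of_subset_of_nonneg hsub (fun t _ _ => le_of_lt (hcs _))
      refine le_trans h1 ?_
      by_cases hTne : ((Finset.range n).filter (fun t => 2 * cAO (t+1) < cAL (k+1))).Nonempty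
      · obtain ⟨t0, ht0max⟩ : ∃ t0, t0 = ((Finset.range n).filter
            (fun t => 2 * cAO (t+1) < cAL (k+1))).max' hTne := ⟨_, rfl⟩
        have ht0mem := ((Finset.range n).filter
            (fun t => 2 * cAO (t+1) < cAL (k+1))).max'_mem hTne
        rw [← ht0max] at ht0mem
        simp only [Finset.mem_filter, Finset.mem_range] at ht0mem
        have hsub2 : (Finset.range n).filter (fun t => 2 * cAO (t+1) < cAL (k+1))
            ⊆ Finset.range (t0+1) := by
          intro t ht
          simp only [Finset.mem_range]
          have := Finset.le_max' _ t ht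
          rw [← ht0max] at this
          omega
        have h2 : ∑ t ∈ (Finset.range n).filter (fun t => 2 * cAO (t+1) < cAL (k+1)),
              cs (O.getD t d) ≤ ∑ t ∈ Finset.range (t0+1), cs (O.getD t d) :=
          Finset.sum_le_sum_of_subset_of_nonneg hsub2 (fun t _ _ => le_of_lt (hcs _))
        have h3 : ∑ t ∈ Finset.range (t0+1), cs (O.getD t d) = cAO (t0+1) := by
          simp only [hcAO]
          rw [csum_take_eq_sum_range cs O d (by omega : t0+1 ≤ O.length)]
        linarith [ht0mem.2]
      · rw [Finset.not_nonempty_iff_eq_empty] at hTne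
        rw [hTne, Finset.sum_empty]
        have := hcALnn (k+1); linarith
    have hfin : ∀ t' ∈ Finset.range n,
        ∑ k ∈ Finset.range n,
            (∑ t ∈ Finset.range n, if Q t ≤ k then cs (O.getD t d) else 0) * BB u L O d t' k
          ≤ ∑ k ∈ Finset.range n, (cAL (k+1) / 2) * BB u L O d t' k := by
      intro t' _
      refine Finset.sum_le_sum (fun k hk => ?_)
      simp only [Finset.mem_range] at hk
      exact mul_le_mul_of_nonneg_right (hWk k (by simp only [Finset.mem_range]; omega))
        (B_nonneg hm hs hL d t' hk)
    refine le_trans (Finset.sum_le_sum hfin) ?_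
    rw [Finset.sum_div]
    refine le_of_eq (Finset.sum_congr rfl (fun t' _ => ?_))
    rw [Finset.sum_div]
    exact Finset.sum_congr rfl (fun k _ => by ring)
  -- final assembly
  have hX1 : objective u c L ≤ ∑ t ∈ Finset.range n,
      (cAL (Q t) * marg u (O.getD t d) (prefSet O t)
        + cs (O.getD t d) * (u Finset.univ - u (prefSet L (Q t))) + D) := by
    rw [hE1]
    exact Finset.sum_le_sum (fun t _ => hspades t (hQ1 t))
  have hsplit3 : ∑ t ∈ Finset.range n,
      (cAL (Q t) * marg u (O.getD t d) (prefSet O t)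
        + cs (O.getD t d) * (u Finset.univ - u (prefSet L (Q t))) + D)
      = ∑ t ∈ Finset.range n, cAL (Q t) * marg u (O.getD t d) (prefSet O t)
        + ∑ t ∈ Finset.range n, cs (O.getD t d) * (u Finset.univ - u (prefSet L (Q t)))
        + n * D := by
    rw [Finset.sum_add_distrib, Finset.sum_add_distrib, Finset.sum_const,
      Finset.card_range, nsmul_eq_mul]
  have hcost : ∑ t ∈ Finset.range n, cAL (Q t) * marg u (O.getD t d) (prefSet O t)
      ≤ 2 * objective u c O := by
    rw [hE2, Finset.mul_sum]
    refine Finset.sum_le_sum (fun t _ => ?_)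
    have h1 := mul_le_mul_of_nonneg_right (hQ2 t) (marg_nonneg hm (O.getD t d) (prefSet O t))
    calc cAL (Q t) * marg u (O.getD t d) (prefSet O t)
        ≤ 2 * cAO (t+1) * marg u (O.getD t d) (prefSet O t) := h1
      _ = 2 * (cAO (t+1) * marg u (O.getD t d) (prefSet O t)) := by ring
  have hXW : ∑ t ∈ Finset.range n, cs (O.getD t d) * (u Finset.univ - u (prefSet L (Q t)))
      ≤ objective u c L / 2 := by
    rw [hE1]
    exact hW
  linarith

end Core

section MoveLe

variable {n : ℕ} [NeZero n] {u : Finset (Fin n) → ℝ} {cs : Fin n → ℝ} {c : Finset (Fin n) → ℝ}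

theorem move_le_pseudo (hc : ∀ S, c S = ∑ i ∈ S, cs i) (hm : Mono u) (hcs : ∀ i, 0 < cs i)
    {L : List (Fin n)} (hL : IsPermList L) {j p : ℕ} (hj : 1 ≤ j) (hjp : j < p) (hp : p ≤ n) :
    objective u c (moveList L p j) ≤ pseudoObj u cs (pseudoNeighbor L p j) := by
  have hlen : L.length = n := perm_length hL
  set e : Fin n := elemAt L p with hed
  set q : ℕ := j - 1 with hqdef
  set r : ℕ := p - 1 with hrdef
  have hqr : q < r := by omega
  have hrn : r < n := by omega
  have hn2 : 2 ≤ n := by omega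
  have heg : e = L.getD r default := by rw [hed]; rfl
  set P : List (Fin n) := pseudoNeighbor L p j with hPdef
  set ML : List (Fin n) := moveList L p j with hMLdef
  have hPeq : P = L.insertIdx q e := by rw [hPdef]; rfl
  have hMLeq : ML = (L.eraseIdx r).insertIdx q e := by rw [hMLdef]; rfl
  have hlenE : (L.eraseIdx r).length = n - 1 := by
    rw [List.length_eraseIdx, if_pos (by omega), hlen]
  have hqE : q ≤ (L.eraseIdx r).length := by omega
  have hlenML : ML.length = n := by
    rw [hMLeq, List.length_insertIdx_of_le_length hqE, hlenE]; omega
  have hlenP : P.length = n + 1 := by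
    rw [hPeq, List.length_insertIdx_of_le_length (by omega), hlen]
  -- claim A : prefixes up to r+1 agree
  have hA : ∀ {m : ℕ}, m ≤ r + 1 → prefSet ML m = prefSet P m := by
    intro m hmr
    rcases le_or_gt m q with hmq | hmq
    · unfold prefSet
      rw [hMLeq, hPeq, take_insertIdx_le e hmq hqE, take_insertIdx_le e hmq (by omega),
        eraseIdx_take_le (by omega : m ≤ r)]
    · have h1 : (ML.take m).Perm (e :: (L.eraseIdx r).take (m-1)) := by
        rw [hMLeq]; exact take_insertIdx_gt e hmq hqE
      have h2 : (P.take m).Perm (e :: L.take (m-1)) := by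
        rw [hPeq]; exact take_insertIdx_gt e hmq (by omega)
      have h3 : (L.eraseIdx r).take (m-1) = L.take (m-1) := eraseIdx_take_le (by omega)
      unfold prefSet
      rw [List.toFinset_eq_of_perm _ _ h1, List.toFinset_eq_of_perm _ _ h2, h3]
  -- claim B : later prefixes of ML agree with those of L, and match P shifted by one
  have hBML : ∀ {m : ℕ}, r < m → m ≤ n → prefSet ML m = prefSet L m := by
    intro m h1 h2
    have hml : (ML.take m).Perm (e :: (L.eraseIdx r).take (m-1)) := by
      rw [hMLeq]; exact take_insertIdx_gt e (by omega) hqE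
    have hlt : (L.take m).Perm ((L.getD r default) :: (L.eraseIdx r).take (m-1)) := by
      have := eraseIdx_take_ge (default : Fin n) (l := L) (by omega : r < L.length)
        (by omega : r ≤ m - 1)
      rw [show (m-1) + 1 = m by omega] at this
      exact this
    unfold prefSet
    rw [List.toFinset_eq_of_perm _ _ hml, List.toFinset_eq_of_perm _ _ hlt, heg]
  have hBP : ∀ {m : ℕ}, r < m → m ≤ n → prefSet P (m+1) = prefSet L m := by
    intro m h1 h2
    have hpp : (P.take (m+1)).Perm (e :: L.take m) := by
      rw [hPeq]
      have := take_insertIdx_gt e (by omega : q < m + 1) (by omega : q ≤ L.length)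
      rw [show (m+1) - 1 = m by omega] at this
      exact this
    unfold prefSet
    rw [List.toFinset_eq_of_perm _ _ hpp, List.toFinset_cons]
    rw [heg]
    exact Finset.insert_eq_self.2 (getD_mem_prefSet default h1 (by omega))
  -- pseudo terms are nonnegative
  have hptnn : ∀ k : ℕ, 0 ≤ ((P.take (k+1)).map cs).sum *
      (u (prefSet P (k+1)) - u (prefSet P k)) := by
    intro k
    refine mul_nonneg (csum_nonneg hcs _) ?_
    have := mono_subset hm (prefSet_mono P (by omega : k ≤ k + 1))
    linarith
  -- cost comparison
  have hcost : ∀ k : ℕ, c (prefSet P k) ≤ ((P.take k).map cs).sum := by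
    intro k
    exact c_toFinset_le hc hcs (P.take k)
  -- termwise comparison
  set σ : ℕ → ℕ := fun m => if m ≤ r then m else m + 1 with hσ
  have hterm : ∀ m ∈ Finset.range n,
      c (prefSet ML (m+1)) * (u (prefSet ML (m+1)) - u (prefSet ML m))
        ≤ ((P.take (σ m + 1)).map cs).sum *
            (u (prefSet P (σ m + 1)) - u (prefSet P (σ m))) := by
    intro m hmem
    simp only [Finset.mem_range] at hmem
    rcases le_or_gt m r with hmr | hmr
    · have hσm : σ m = m := by simp only [hσ]; rw [if_pos hmr]
      rw [hσm, hA (by omega : m + 1 ≤ r + 1), hA (by omega : m ≤ r + 1)]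
      refine mul_le_mul_of_nonneg_right (hcost (m+1)) ?_
      have := mono_subset hm (prefSet_mono P (by omega : m ≤ m + 1))
      linarith
    · have hσm : σ m = m + 1 := by simp only [hσ]; rw [if_neg (by omega)]
      rw [hσm, hBML (m := m + 1) (by omega) (by omega), hBML (m := m) (by omega) (by omega),
        ← hBP (m := m + 1) (by omega) (by omega), ← hBP (m := m) (by omega) (by omega)]
      refine mul_le_mul_of_nonneg_right (hcost (m+2)) ?_
      have := mono_subset hm (prefSet_mono P (by omega : m + 1 ≤ m + 2))
      linarith
  -- sum up
  have hobjML : objective u c ML = ∑ m ∈ Finset.range n,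
      c (prefSet ML (m+1)) * (u (prefSet ML (m+1)) - u (prefSet ML m)) := by
    unfold objective; rw [hlenML]
  have hpseP : pseudoObj u cs P = ∑ k ∈ Finset.range (n+1),
      ((P.take (k+1)).map cs).sum * (u (prefSet P (k+1)) - u (prefSet P k)) := by
    unfold pseudoObj; rw [hlenP]
  have hinj : ∀ a ∈ Finset.range n, ∀ b ∈ Finset.range n, σ a = σ b → a = b := by
    intro a _ b _ hab
    simp only [hσ] at hab
    split_ifs at hab <;> omega
  have himg : (Finset.range n).image σ ⊆ Finset.range (n+1) := by
    intro k hk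
    obtain ⟨m, hmmem, rfl⟩ := Finset.mem_image.1 hk
    simp only [Finset.mem_range] at hmmem ⊢
    simp only [hσ]
    split_ifs <;> omega
  calc objective u c ML
      = ∑ m ∈ Finset.range n,
          c (prefSet ML (m+1)) * (u (prefSet ML (m+1)) - u (prefSet ML m)) := hobjML
    _ ≤ ∑ m ∈ Finset.range n, ((P.take (σ m + 1)).map cs).sum *
          (u (prefSet P (σ m + 1)) - u (prefSet P (σ m))) := Finset.sum_le_sum hterm
    _ = ∑ k ∈ (Finset.range n).image σ, ((P.take (k+1)).map cs).sum *
          (u (prefSet P (k+1)) - u (prefSet P k)) :=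
        (Finset.sum_image (f := fun k => ((P.take (k+1)).map cs).sum *
          (u (prefSet P (k+1)) - u (prefSet P k))) hinj).symm
    _ ≤ ∑ k ∈ Finset.range (n+1), ((P.take (k+1)).map cs).sum *
          (u (prefSet P (k+1)) - u (prefSet P k)) :=
        Finset.sum_le_sum_of_subset_of_nonneg himg (fun k _ _ => hptnn k)
    _ = pseudoObj u cs P := hpseP.symm

end MoveLe

theorem improvement_step (n : ℕ) [NeZero n] (u c : Finset (Fin n) → ℝ) (cs : Fin n → ℝ)
    (hu0 : u ∅ = 0) (hu_nonneg : ∀ S, 0 ≤ u S) (hu_mono : Mono u)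
    (hu_sub : Submod u) (hu_sos : SOSupermod u)
    (hcs_pos : ∀ i, 0 < cs i) (hc : ∀ S, c S = ∑ i ∈ S, cs i)
    (OPT M : ℝ) (hOPT_pos : 0 < OPT)
    (hOPT_lb : ∀ O, IsPermList O → OPT ≤ objective u c O)
    (hOPT_att : ∃ O, IsPermList O ∧ objective u c O = OPT)
    (π : List (Fin n)) (hπ : IsPermList π) (hM : objective u c π = M * OPT) :
    LocallyOptimalInsertions u c cs π ∨
      ∃ π', IsMoveNeighbor π π' ∧
        objective u c π' ≤ (M - (M - 4) / (2 * n)) * OPT := by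
  by_cases hLO : LocallyOptimalInsertions u c cs π
  · exact Or.inl hLO
  · right
    unfold LocallyOptimalInsertions at hLO
    push_neg at hLO
    obtain ⟨i0, j0, hj0, hji0, hi0n, himp⟩ := hLO
    obtain ⟨O, hOperm, hOopt⟩ := hOPT_att
    classical
    set Pairs : Finset (ℕ × ℕ) :=
      ((Finset.Icc 1 n) ×ˢ (Finset.Icc 1 n)).filter (fun pr => pr.2 < pr.1) with hPairs
    have hmemP : ∀ i j : ℕ, 1 ≤ j → j < i → i ≤ n → (i, j) ∈ Pairs := by
      intro i j h1 h2 h3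
      simp only [hPairs, Finset.mem_filter, Finset.mem_product, Finset.mem_Icc]
      omega
    have hmem0 : (i0, j0) ∈ Pairs := hmemP i0 j0 hj0 hji0 hi0n
    have hne : Pairs.Nonempty := ⟨_, hmem0⟩
    set G : ℕ × ℕ → ℝ :=
      fun pr => objective u c π - pseudoObj u cs (pseudoNeighbor π pr.1 pr.2) with hG
    set D : ℝ := Pairs.sup' hne G with hDdef
    have hDub : ∀ i j : ℕ, 1 ≤ j → j < i → i ≤ n →
        objective u c π - pseudoObj u cs (pseudoNeighbor π i j) ≤ D := by
      intro i j h1 h2 h3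
      exact Finset.le_sup' G (hmemP i j h1 h2 h3)
    have hDpos : 0 < D := by
      refine lt_of_lt_of_le ?_ (Finset.le_sup' G hmem0)
      simp only [hG]
      linarith
    obtain ⟨pr, hprmem, hpreq⟩ := Finset.exists_mem_eq_sup' hne G
    have hprfacts : 1 ≤ pr.1 ∧ pr.1 ≤ n ∧ 1 ≤ pr.2 ∧ pr.2 ≤ n ∧ pr.2 < pr.1 := by
      have := hprmem
      simp only [hPairs, Finset.mem_filter, Finset.mem_product, Finset.mem_Icc] at this
      omega
    obtain ⟨hp1, hp2, hp3, hp4, hp5⟩ := hprfacts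
    have hcore := core_bound hc hu_mono hu_sub hu_sos hcs_pos hπ hOperm
      (le_of_lt hDpos) hDub
    rw [hM, hOopt] at hcore
    have hn0 : 0 < (n : ℝ) := by
      have := NeZero.pos n
      exact_mod_cast this
    have hDge : (M - 4) * OPT / (2 * n) ≤ D := by
      rw [div_le_iff₀ (by positivity)]
      linarith
    have h1 : objective u c (moveList π pr.1 pr.2)
        ≤ pseudoObj u cs (pseudoNeighbor π pr.1 pr.2) :=
      move_le_pseudo hc hu_mono hcs_pos hπ hp3 hp5 hp2
    have h2 : pseudoObj u cs (pseudoNeighbor π pr.1 pr.2) = objective u c π - D := by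
      have : D = G pr := hpreq
      simp only [hG] at this
      linarith
    refine ⟨moveList π pr.1 pr.2, ⟨pr.1, pr.2, hp1, hp2, hp3, hp4, by omega, rfl⟩, ?_⟩
    calc objective u c (moveList π pr.1 pr.2)
        ≤ objective u c π - D := by rw [← h2]; exact h1
      _ = M * OPT - D := by rw [hM]
      _ ≤ M * OPT - (M - 4) * OPT / (2 * n) := by linarith
      _ = (M - (M - 4) / (2 * n)) * OPT := by ring
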